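/- arXiv:1005.1531 — 3 statements merged into one kernel-verified Lean document; each statement's English description precedes it below -/
import Mathlib

section
/- Let ℓ, m be positive integers. Then the gcd of all elements of G_m(ℓ) equals ((ℓ, m)). In particular ((ℓ, m)) is the least element of G_m(ℓ). -/
/-- `((ℓ, m)) = ∏_{p prime, p ∣ ℓ} p ^ ν_p(m)`. -/
def dblParen (ℓ m : ℕ) : ℕ := ∏ p ∈ ℓ.primeFactors, p ^ (m.factorization p)

lemma dblParen_pos (ℓ m : ℕ) : 0 < dblParen ℓ m :=
  Finset.prod_pos fun p hp => pow_pos (Nat.prime_of_mem_primeFactors hp).pos _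

lemma dblParen_factorization (ℓ m : ℕ) (q : ℕ) :
    (dblParen ℓ m).factorization q =
      if q ∈ ℓ.primeFactors then m.factorization q else 0 := by
  unfold dblParen
  rw [Nat.factorization_prod
    (fun p hp => pow_ne_zero _ (Nat.prime_of_mem_primeFactors hp).pos.ne')]
  rw [Finsupp.finset_sum_apply]
  rw [Finset.sum_congr rfl
    (fun p hp => by rw [(Nat.prime_of_mem_primeFactors hp).factorization_pow,
      Finsupp.single_apply])]
  simp [Finset.sum_ite_eq]

theorem gcd_of_G_eq_dblParen (ℓ m : ℕ) (hℓ : 0 < ℓ) (hm : 0 < m) :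
    (∀ g ∈ {g : ℕ | 1 ≤ g ∧ Nat.gcd (g * ℓ) m = g}, dblParen ℓ m ∣ g) ∧
    (∀ d : ℕ, (∀ g ∈ {g : ℕ | 1 ≤ g ∧ Nat.gcd (g * ℓ) m = g}, d ∣ g) → d ∣ dblParen ℓ m) ∧
    IsLeast {g : ℕ | 1 ≤ g ∧ Nat.gcd (g * ℓ) m = g} (dblParen ℓ m) := by
  have hD : 0 < dblParen ℓ m := dblParen_pos ℓ m
  -- D divides every element of the set
  have hdvd : ∀ g ∈ {g : ℕ | 1 ≤ g ∧ Nat.gcd (g * ℓ) m = g}, dblParen ℓ m ∣ g := by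
    rintro g ⟨hg1, hg⟩
    have hg0 : g ≠ 0 := by omega
    rw [← Nat.factorization_le_iff_dvd hD.ne' hg0, Finsupp.le_def]
    intro q
    rw [dblParen_factorization]
    split_ifs with hq
    · -- q ∣ ℓ, so ν_q m ≤ ν_q g
      have hql : 1 ≤ ℓ.factorization q :=
        (Nat.Prime.factorization_pos_of_dvd (Nat.prime_of_mem_primeFactors hq) hℓ.ne'
          (Nat.dvd_of_mem_primeFactors hq))
      have := congrArg (fun n => n.factorization q) hg
      simp only [Nat.factorization_gcd (mul_ne_zero hg0 hℓ.ne') hm.ne',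
        Finsupp.inf_apply, Nat.factorization_mul hg0 hℓ.ne', Finsupp.add_apply] at this
      omega
    · exact Nat.zero_le _
  -- D is itself in the set
  have hmem : dblParen ℓ m ∈ {g : ℕ | 1 ≤ g ∧ Nat.gcd (g * ℓ) m = g} := by
    refine ⟨hD, ?_⟩
    have hDl : dblParen ℓ m * ℓ ≠ 0 := mul_ne_zero hD.ne' hℓ.ne'
    apply Nat.eq_of_factorization_eq (Nat.gcd_ne_zero_left hDl) hD.ne'
    intro q
    rw [Nat.factorization_gcd hDl hm.ne', Finsupp.inf_apply,
      Nat.factorization_mul hD.ne' hℓ.ne', Finsupp.add_apply,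
      dblParen_factorization]
    split_ifs with hq
    · omega
    · have hql : ℓ.factorization q = 0 := by
        by_contra h
        exact hq (Nat.support_factorization ℓ ▸ Finsupp.mem_support_iff.mpr h)
      omega
  refine ⟨hdvd, fun d hd => hd _ hmem, hmem, fun g hg => Nat.le_of_dvd hg.1 (hdvd g hg)⟩
end

section
/- Let ℓ, m, g, p be positive integers with gcd(g·ℓ, m) = g. Let σ be a permutation of a set of size g·p·ℓ consisting of exactly g·p disjoint cycles each of length ℓ. Then the number of permutations τ consisting of p disjoint cycles each of length g·ℓ such that τ^m = σ equals (g·p)! · ℓ^{p(g−1)} / (g^p · p!). -/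
open Equiv Equiv.Perm Subgroup
set_option linter.unusedSectionVars false

section Orbits

variable {α : Type*} [Fintype α] [DecidableEq α]

lemma sameCycle_set_of_mem_support (f : Perm α) {x : α} (hx : x ∈ f.support) :
    {y : α | f.SameCycle x y} = ↑((f.cycleOf x).support) := by
  ext y
  simp only [Set.mem_setOf_eq, Finset.mem_coe, Equiv.Perm.mem_support_cycleOf_iff, hx, and_true]

lemma sameCycle_set_of_fixed (f : Perm α) {x : α} (hx : f x = x) :
    {y : α | f.SameCycle x y} = {x} := by
  ext y
  simp only [Set.mem_setOf_eq, Set.mem_singleton_iff]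
  constructor
  · rintro ⟨i, rfl⟩
    exact (f.zpow_apply_eq_self_of_apply_eq_self hx i)
  · rintro rfl; exact ⟨0, by simp⟩

lemma uniform_support_eq_univ {c : ℕ} (hc : 2 ≤ c) {f : Perm α}
    (hf : ∀ x : α, Set.ncard {y : α | f.SameCycle x y} = c) : f.support = Finset.univ := by
  refine Finset.eq_univ_iff_forall.2 fun x => ?_
  by_contra hx
  rw [Equiv.Perm.notMem_support] at hx
  have h := hf x
  rw [sameCycle_set_of_fixed f hx, Set.ncard_singleton] at h
  omega

lemma uniform_eq_one {f : Perm α}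
    (hf : ∀ x : α, Set.ncard {y : α | f.SameCycle x y} = 1) : f = 1 := by
  ext x
  by_contra hx
  have hxs : x ∈ f.support := Equiv.Perm.mem_support.2 hx
  have h2 : 2 ≤ ((f.cycleOf x).support).card :=
    (Equiv.Perm.isCycle_cycleOf f hx).two_le_card_support
  have h := hf x
  rw [sameCycle_set_of_mem_support f hxs, Set.ncard_coe_finset] at h
  omega

lemma uniform_cycleType {c k : ℕ} (hc : 2 ≤ c) {f : Perm α}
    (hf : ∀ x : α, Set.ncard {y : α | f.SameCycle x y} = c)
    (hcard : Fintype.card α = c * k) : f.cycleType = Multiset.replicate k c := by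
  have hmem : ∀ n ∈ f.cycleType, n = c := by
    intro n hn
    rw [Equiv.Perm.cycleType_def, Multiset.mem_map] at hn
    obtain ⟨d, hd, rfl⟩ := hn
    have hd' : d ∈ f.cycleFactorsFinset := hd
    have hcyc := (Equiv.Perm.mem_cycleFactorsFinset_iff.1 hd').1
    obtain ⟨x, hx⟩ : ∃ x, x ∈ d.support := by
      rcases Finset.eq_empty_or_nonempty d.support with h | ⟨x, hx⟩
      · exact absurd (Equiv.Perm.support_eq_empty_iff.1 h) hcyc.ne_one
      · exact ⟨x, hx⟩
    have hdx : d = f.cycleOf x := Equiv.Perm.cycle_is_cycleOf hx hd'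
    have hxs : x ∈ f.support := by
      have hdx2 := Equiv.Perm.mem_support.1 hx
      have heq := (Equiv.Perm.mem_cycleFactorsFinset_iff.1 hd').2 x hx
      exact Equiv.Perm.mem_support.2 (by rw [← heq]; exact hdx2)
    have h := hf x
    rw [sameCycle_set_of_mem_support f hxs, Set.ncard_coe_finset] at h
    simpa [hdx] using h
  have h1 : f.cycleType = Multiset.replicate (Multiset.card f.cycleType) c :=
    Multiset.eq_replicate_card.2 hmem
  have hsum := Equiv.Perm.sum_cycleType f
  rw [uniform_support_eq_univ hc hf] at hsum
  rw [h1, Multiset.sum_replicate, smul_eq_mul] at hsum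
  have hk : Multiset.card f.cycleType = k := by
    have h2 : Multiset.card f.cycleType * c = c * k := by
      rw [hsum, Finset.card_univ, hcard]
    exact Nat.eq_of_mul_eq_mul_left (lt_of_lt_of_le two_pos hc) (by rw [mul_comm] at h2; exact h2)
  rw [h1, hk]

end Orbits



section Transfer

lemma uniform_isConj {α : Type*} [Fintype α] [DecidableEq α] {c k : ℕ} (hc : 0 < c)
    {f f' : Equiv.Perm α}
    (hf : ∀ x : α, Set.ncard {y : α | f.SameCycle x y} = c)
    (hf' : ∀ x : α, Set.ncard {y : α | f'.SameCycle x y} = c)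
    (hcard : Fintype.card α = c * k) : IsConj f f' := by
  rcases Nat.lt_or_ge c 2 with h | h
  · have hc1 : c = 1 := by omega
    subst hc1
    rw [uniform_eq_one hf, uniform_eq_one hf']
  · exact Equiv.Perm.isConj_of_cycleType_eq
      ((uniform_cycleType h hf hcard).trans (uniform_cycleType h hf' hcard).symm)

/-- `Equiv.permCongr` as a `MulEquiv`. -/
def permCongrME {β γ : Type*} (e : β ≃ γ) : Equiv.Perm β ≃* Equiv.Perm γ :=
  { e.permCongr with
    map_mul' := fun p q => by
      ext x
      simp [Equiv.permCongr_apply, Equiv.Perm.mul_apply] }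

lemma permCongrME_apply {β γ : Type*} (e : β ≃ γ) (f : Equiv.Perm β) (x : γ) :
    permCongrME e f x = e (f (e.symm x)) := rfl

lemma uniform_permCongr {β α : Type*} {c : ℕ} (e : β ≃ α) {f : Equiv.Perm β}
    (hf : ∀ x : β, Set.ncard {y : β | f.SameCycle x y} = c) (x : α) :
    Set.ncard {y : α | (permCongrME e f).SameCycle x y} = c := by
  have key : ∀ (i : ℤ) (z : α), ((permCongrME e f) ^ i) z = e ((f ^ i) (e.symm z)) := by
    intro i z
    rw [← map_zpow]
    rfl
  have hset : {y : α | (permCongrME e f).SameCycle x y}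
      = e '' {y : β | f.SameCycle (e.symm x) y} := by
    ext y
    simp only [Set.mem_setOf_eq, Set.mem_image]
    constructor
    · rintro ⟨i, hi⟩
      rw [key] at hi
      exact ⟨(f ^ i) (e.symm x), ⟨i, rfl⟩, hi⟩
    · rintro ⟨z, ⟨i, hi⟩, rfl⟩
      exact ⟨i, by rw [key, hi]⟩
  rw [hset, Set.ncard_image_of_injective _ e.injective, hf]

lemma card_centralizer_congr {G H : Type*} [Group G] [Group H] (Φ : G ≃* H) (x : G) :
    Nat.card (Subgroup.centralizer ({Φ x} : Set H)) =
      Nat.card (Subgroup.centralizer ({x} : Set G)) := by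
  apply Nat.card_congr
  refine Equiv.subtypeEquiv Φ.toEquiv.symm fun h => ?_
  simp only [Subgroup.mem_centralizer_singleton_iff, MulEquiv.toEquiv_symm,
    MulEquiv.coe_toEquiv, MulEquiv.coe_toEquiv_symm]
  constructor
  · intro hh
    have := congrArg Φ.symm hh
    simpa [map_mul] using this
  · intro hh
    have := congrArg Φ hh
    simpa [map_mul] using this

end Transfer

section Model

open Equiv AddSubgroup

/-- rotation by `a` on each of the `k` copies of `ZMod n`. -/
def modelRot (k n : ℕ) (a : ZMod n) : Equiv.Perm (Fin k × ZMod n) :=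
  Equiv.prodCongr (Equiv.refl (Fin k)) (Equiv.addRight a)

lemma modelRot_apply (k n : ℕ) (a : ZMod n) (q : Fin k × ZMod n) :
    modelRot k n a q = (q.1, q.2 + a) := rfl

lemma modelRot_mul (k n : ℕ) (a b : ZMod n) :
    modelRot k n a * modelRot k n b = modelRot k n (a + b) := by
  ext q
  · rfl
  · show q.2 + b + a = q.2 + (a + b)
    rw [add_assoc, add_comm b a]

/-- `modelRot` as a monoid hom from `Multiplicative (ZMod n)`. -/
def modelHom (k n : ℕ) : Multiplicative (ZMod n) →* Equiv.Perm (Fin k × ZMod n) :=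
  MonoidHom.mk' (fun a => modelRot k n a.toAdd) (fun _ _ => (modelRot_mul k n _ _).symm)

lemma modelRot_zpow (k n : ℕ) (a : ZMod n) (i : ℤ) :
    (modelRot k n a) ^ i = modelRot k n (i • a) := by
  have h1 : modelRot k n a = modelHom k n (Multiplicative.ofAdd a) := rfl
  rw [h1, ← map_zpow]
  rfl

lemma modelRot_pow (k n : ℕ) (a : ZMod n) (i : ℕ) :
    (modelRot k n a) ^ i = modelRot k n (i • a) := by
  have := modelRot_zpow k n a (i : ℤ)
  rwa [zpow_natCast, natCast_zsmul] at this

lemma modelRot_orbit_ncard (k n : ℕ) [NeZero n] (a : ZMod n) (q : Fin k × ZMod n) :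
    Set.ncard {y | (modelRot k n a).SameCycle q y} = addOrderOf a := by
  have hset : {y | (modelRot k n a).SameCycle q y}
      = (fun z : ZMod n => (q.1, q.2 + z)) '' ↑(AddSubgroup.zmultiples a) := by
    ext y
    simp only [Set.mem_setOf_eq, Set.mem_image, SetLike.mem_coe, AddSubgroup.mem_zmultiples_iff]
    constructor
    · rintro ⟨i, hi⟩
      rw [modelRot_zpow, modelRot_apply] at hi
      exact ⟨i • a, ⟨i, rfl⟩, hi⟩
    · rintro ⟨z, ⟨i, rfl⟩, hy⟩
      exact ⟨i, by rw [modelRot_zpow, modelRot_apply]; exact hy⟩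
  have hinj : Function.Injective (fun z : ZMod n => (q.1, q.2 + z)) := by
    intro z z' h
    have := (Prod.ext_iff.1 h).2
    simpa using this
  rw [hset, Set.ncard_image_of_injective _ hinj, ← Nat.card_coe_set_eq]
  rw [← Nat.card_zmultiples a]
  rfl

end Model


lemma card_centralizer_modelRot (k n : ℕ) [NeZero n] :
    Nat.card (Subgroup.centralizer {modelRot k n 1}) = n ^ k * Nat.factorial k := by
  classical
  have hval : ∀ x : ZMod n, ((x.val : ℕ) : ZMod n) = x := fun x => by
    rw [ZMod.natCast_val, ZMod.cast_id]
  -- the key formula for members of the centralizer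
  have formula : ∀ f : Equiv.Perm (Fin k × ZMod n),
      f * modelRot k n 1 = modelRot k n 1 * f →
      ∀ (j : Fin k) (x : ZMod n), f (j, x) = ((f (j, 0)).1, (f (j, 0)).2 + x) := by
    intro f hcomm j x
    have step : ∀ q : Fin k × ZMod n, f (q.1, q.2 + 1) = ((f q).1, (f q).2 + 1) := by
      intro q
      have h1 : (f * modelRot k n 1) q = (modelRot k n 1 * f) q := by rw [hcomm]
      rw [Equiv.Perm.mul_apply, Equiv.Perm.mul_apply, modelRot_apply, modelRot_apply] at h1
      exact h1
    have natstep : ∀ (t : ℕ) (y : ZMod n), f (j, y + (t : ZMod n))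
        = ((f (j, y)).1, (f (j, y)).2 + (t : ZMod n)) := by
      intro t
      induction t with
      | zero => intro y; simp
      | succ t ih =>
        intro y
        have : ((t + 1 : ℕ) : ZMod n) = (t : ZMod n) + 1 := by push_cast; ring
        rw [this, ← add_assoc, step (j, y + (t : ZMod n)), ih, ← add_assoc]
    have := natstep x.val 0
    rwa [zero_add, hval x] at this
  -- the equivalence
  let B : Equiv.Perm (Fin k) × (Fin k → ZMod n) → Equiv.Perm (Fin k × ZMod n) :=
    fun pa => Equiv.prodShear pa.1 (fun j => Equiv.addRight (pa.2 j))
  have hBapp : ∀ pa (j : Fin k) (x : ZMod n), B pa (j, x) = (pa.1 j, x + pa.2 j) :=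
    fun pa j x => rfl
  have hBmem : ∀ pa, B pa ∈ Subgroup.centralizer {modelRot k n 1} := by
    intro pa
    rw [Subgroup.mem_centralizer_singleton_iff]
    ext q
    · rfl
    · show ((q.2 + 1) + pa.2 q.1 : ZMod n) = (q.2 + pa.2 q.1) + 1
      ring
  have hBinj : Function.Injective B := by
    intro ⟨π, a⟩ ⟨π', a'⟩ h
    have happ : ∀ j : Fin k, (π j, (0 : ZMod n) + a j) = (π' j, (0 : ZMod n) + a' j) := by
      intro j
      have := congrArg (fun f : Equiv.Perm (Fin k × ZMod n) => f (j, 0)) h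
      simpa [hBapp] using this
    have hπ : π = π' := Equiv.ext fun j => (Prod.ext_iff.1 (happ j)).1
    have ha : a = a' := funext fun j => by
      have := (Prod.ext_iff.1 (happ j)).2
      simpa using this
    simp [hπ, ha]
  have hBsurj : ∀ f ∈ Subgroup.centralizer {modelRot k n 1}, ∃ pa, B pa = f := by
    intro f hf
    have hcomm := Subgroup.mem_centralizer_singleton_iff.1 hf
    have hcomm' := Subgroup.mem_centralizer_singleton_iff.1
      (Subgroup.inv_mem _ hf)
    have F := formula f hcomm
    have F' := formula f⁻¹ hcomm'
    set u : Fin k → Fin k := fun j => (f (j, 0)).1 with hu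
    set a : Fin k → ZMod n := fun j => (f (j, 0)).2 with ha
    set v : Fin k → Fin k := fun j => (f⁻¹ (j, 0)).1 with hv
    set b : Fin k → ZMod n := fun j => (f⁻¹ (j, 0)).2 with hb
    have hf0 : ∀ j, f (j, 0) = (u j, a j) := fun j => rfl
    have hf0' : ∀ j, f⁻¹ (j, 0) = (v j, b j) := fun j => rfl
    have hvu : ∀ j, v (u j) = j := by
      intro j
      have h1 : f⁻¹ (u j, a j) = (j, 0) := by
        rw [← hf0 j]; exact Equiv.symm_apply_apply f (j, 0)
      rw [F' (u j) (a j)] at h1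
      exact (Prod.ext_iff.1 h1).1
    have huv : ∀ j, u (v j) = j := by
      intro j
      have h1 : f (v j, b j) = (j, 0) := by
        rw [← hf0' j]; exact Equiv.apply_symm_apply f (j, 0)
      rw [F (v j) (b j)] at h1
      exact (Prod.ext_iff.1 h1).1
    refine ⟨⟨⟨u, v, hvu, huv⟩, a⟩, ?_⟩
    apply Equiv.ext
    rintro ⟨j, x⟩
    rw [hBapp, F j x]
    simp [add_comm]
    exact ⟨rfl, rfl⟩
  have hE : Nat.card (Subgroup.centralizer {modelRot k n 1})
      = Nat.card (Equiv.Perm (Fin k) × (Fin k → ZMod n)) := by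
    apply Nat.card_congr
    exact (Equiv.ofBijective (fun pa => (⟨B pa, hBmem pa⟩ : Subgroup.centralizer {modelRot k n 1}))
      ⟨fun x y h => hBinj (Subtype.ext_iff.1 h),
       fun ⟨f, hf⟩ => by obtain ⟨pa, hpa⟩ := hBsurj f hf; exact ⟨pa, Subtype.ext hpa⟩⟩).symm
  rw [hE, Nat.card_eq_fintype_card, Fintype.card_prod, Fintype.card_perm, Fintype.card_fin,
    Fintype.card_fun, ZMod.card, Fintype.card_fin, mul_comm]


section Stab

variable {G : Type*} [Group G]

lemma conj_pow_eq (ρ τ : G) (m : ℕ) : (ρ * τ * ρ⁻¹) ^ m = ρ * τ ^ m * ρ⁻¹ := by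
  have := map_pow (MulAut.conj ρ) τ m
  simpa [MulAut.conj_apply] using this

lemma card_stabilizer_conjAct (σ : G) :
    Nat.card (MulAction.stabilizer (ConjAct G) σ)
      = Nat.card (Subgroup.centralizer ({σ} : Set G)) := by
  apply Nat.card_congr
  refine ⟨fun s => ⟨ConjAct.ofConjAct s.1, ?_⟩, fun g => ⟨ConjAct.toConjAct g.1, ?_⟩,
    fun s => Subtype.ext rfl, fun g => Subtype.ext rfl⟩
  · rw [Subgroup.mem_centralizer_singleton_iff]
    have h2 := s.2
    rw [MulAction.mem_stabilizer_iff, ConjAct.smul_def] at h2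
    exact mul_inv_eq_iff_eq_mul.mp h2
  · have h2 := Subgroup.mem_centralizer_singleton_iff.1 g.2
    rw [MulAction.mem_stabilizer_iff, ConjAct.smul_def, ConjAct.ofConjAct_toConjAct]
    rw [mul_inv_eq_iff_eq_mul]
    exact h2

lemma card_stabilizer_sub (σ τ : G) (hcomm : ∀ g : G, τ * g = g * τ → σ * g = g * σ) :
    Nat.card (MulAction.stabilizer (MulAction.stabilizer (ConjAct G) σ) τ)
      = Nat.card (Subgroup.centralizer ({τ} : Set G)) := by
  apply Nat.card_congr
  refine ⟨fun s => ⟨ConjAct.ofConjAct (s.1 : ConjAct G), ?_⟩,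
    fun g => ⟨⟨ConjAct.toConjAct g.1, ?_⟩, ?_⟩,
    fun s => Subtype.ext (Subtype.ext rfl), fun g => Subtype.ext rfl⟩
  · rw [Subgroup.mem_centralizer_singleton_iff]
    have h2 := s.2
    rw [MulAction.mem_stabilizer_iff, Subgroup.smul_def, ConjAct.smul_def] at h2
    exact mul_inv_eq_iff_eq_mul.mp h2
  · have h2 := Subgroup.mem_centralizer_singleton_iff.1 g.2
    rw [MulAction.mem_stabilizer_iff, ConjAct.smul_def, ConjAct.ofConjAct_toConjAct,
      mul_inv_eq_iff_eq_mul]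
    exact (hcomm g.1 h2.symm).symm
  · have h2 := Subgroup.mem_centralizer_singleton_iff.1 g.2
    rw [MulAction.mem_stabilizer_iff, Subgroup.smul_def, ConjAct.smul_def,
      ConjAct.ofConjAct_toConjAct, mul_inv_eq_iff_eq_mul]
    exact h2

end Stab


theorem card_roots_type_gl_pow_p {α : Type*} [Fintype α] [DecidableEq α]
    (ℓ m g p : ℕ) (hℓ : 0 < ℓ) (hm : 0 < m) (hg : 0 < g) (hp : 0 < p)
    (hgcd : Nat.gcd (g * ℓ) m = g)
    (hcard : Fintype.card α = g * p * ℓ)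
    (σ : Equiv.Perm α)
    (hσ : ∀ x : α, Set.ncard {y : α | σ.SameCycle x y} = ℓ) :
    Nat.card {τ : Equiv.Perm α //
        (∀ x : α, Set.ncard {y : α | τ.SameCycle x y} = g * ℓ) ∧ τ ^ m = σ} *
      (g ^ p * Nat.factorial p) = Nat.factorial (g * p) * ℓ ^ (p * (g - 1)) := by
  classical
  haveI : NeZero ℓ := ⟨hℓ.ne'⟩
  haveI : NeZero (g * ℓ) := ⟨(Nat.mul_pos hg hℓ).ne'⟩
  have hn0 : (g * ℓ) ≠ 0 := (Nat.mul_pos hg hℓ).ne'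
  -- model equivalences
  have hcard₁ : Fintype.card (Fin p × ZMod (g * ℓ)) = Fintype.card α := by
    rw [Fintype.card_prod, Fintype.card_fin, ZMod.card, hcard]; ring
  have hcard₂ : Fintype.card (Fin (g * p) × ZMod ℓ) = Fintype.card α := by
    rw [Fintype.card_prod, Fintype.card_fin, ZMod.card, hcard]
  obtain ⟨e₁⟩ := Fintype.card_eq.1 hcard₁
  obtain ⟨e₂⟩ := Fintype.card_eq.1 hcard₂
  -- the τ-side model permutation
  set T : Equiv.Perm (Fin p × ZMod (g * ℓ)) := modelRot p (g * ℓ) 1 with hT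
  have hTu : ∀ x, Set.ncard {y | T.SameCycle x y} = g * ℓ := by
    intro x; rw [hT, modelRot_orbit_ncard, ZMod.addOrderOf_one]
  have hTmu : ∀ x, Set.ncard {y | (T ^ m).SameCycle x y} = ℓ := by
    intro x
    have hTm : T ^ m = modelRot p (g * ℓ) ((m : ℕ) : ZMod (g * ℓ)) := by
      rw [hT, modelRot_pow]; congr 1; rw [nsmul_eq_mul, mul_one]
    rw [hTm, modelRot_orbit_ncard, ZMod.addOrderOf_coe m hn0, hgcd,
      Nat.mul_div_cancel_left ℓ hg]
  set τ₁ : Equiv.Perm α := permCongrME e₁ T with hτ₁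
  have hτ₁u : ∀ x, Set.ncard {y | τ₁.SameCycle x y} = g * ℓ := uniform_permCongr e₁ hTu
  have hτ₁mu : ∀ x : α, Set.ncard {y | (τ₁ ^ m).SameCycle x y} = ℓ := by
    intro x
    have h1 : τ₁ ^ m = permCongrME e₁ (T ^ m) := by rw [hτ₁, map_pow]
    rw [h1]; exact uniform_permCongr e₁ hTmu x
  -- conjugate to get an actual root of σ
  have hconj : IsConj (τ₁ ^ m) σ :=
    uniform_isConj (k := g * p) hℓ hτ₁mu hσ (by rw [hcard]; ring)
  obtain ⟨ρ, hρ⟩ := isConj_iff.1 hconj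
  set τ₀ : Equiv.Perm α := ρ * τ₁ * ρ⁻¹ with hτ₀
  have hτ₀m : τ₀ ^ m = σ := by rw [hτ₀, conj_pow_eq, hρ]
  have hτ₀u : ∀ x, Set.ncard {y | τ₀.SameCycle x y} = g * ℓ := by
    intro x
    have h1 : τ₀ = permCongrME ρ τ₁ := by
      rw [hτ₀]; exact (Equiv.permCongr_eq_mul ρ τ₁).symm
    rw [h1]; exact uniform_permCongr ρ hτ₁u x
  -- the set of roots is the orbit of τ₀ under the stabilizer of σ
  set H : Subgroup (ConjAct (Equiv.Perm α)) := MulAction.stabilizer (ConjAct (Equiv.Perm α)) σ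
    with hH
  have horb : ∀ τ : Equiv.Perm α,
      ((∀ x : α, Set.ncard {y : α | τ.SameCycle x y} = g * ℓ) ∧ τ ^ m = σ)
        ↔ τ ∈ MulAction.orbit H τ₀ := by
    intro τ
    constructor
    · rintro ⟨hτu, hτm⟩
      have hc : IsConj τ₀ τ :=
        uniform_isConj (k := p) (Nat.mul_pos hg hℓ) hτ₀u hτu (by rw [hcard]; ring)
      obtain ⟨ρ', hρ'⟩ := isConj_iff.1 hc
      have hρ'H : ConjAct.toConjAct ρ' ∈ H := by
        rw [hH, MulAction.mem_stabilizer_iff, ConjAct.smul_def, ConjAct.ofConjAct_toConjAct]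
        calc ρ' * σ * ρ'⁻¹ = ρ' * τ₀ ^ m * ρ'⁻¹ := by rw [hτ₀m]
          _ = (ρ' * τ₀ * ρ'⁻¹) ^ m := (conj_pow_eq ρ' τ₀ m).symm
          _ = τ ^ m := by rw [hρ']
          _ = σ := hτm
      refine ⟨⟨ConjAct.toConjAct ρ', hρ'H⟩, ?_⟩
      show (ConjAct.toConjAct ρ' : ConjAct (Equiv.Perm α)) • τ₀ = τ
      rw [ConjAct.smul_def, ConjAct.ofConjAct_toConjAct]; exact hρ'
    · rw [MulAction.mem_orbit_iff]
      rintro ⟨k, rfl⟩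
      have hsm : k • τ₀
          = ConjAct.ofConjAct (k : ConjAct (Equiv.Perm α)) * τ₀
            * (ConjAct.ofConjAct (k : ConjAct (Equiv.Perm α)))⁻¹ := by
        rw [Subgroup.smul_def, ConjAct.smul_def]
      have hhσ : ConjAct.ofConjAct (k : ConjAct (Equiv.Perm α)) * σ
          * (ConjAct.ofConjAct (k : ConjAct (Equiv.Perm α)))⁻¹ = σ := by
        have hk2 : (↑k : ConjAct (Equiv.Perm α)) • σ = σ := k.2
        rwa [ConjAct.smul_def] at hk2
      constructor
      · intro x
        have h1 : k • τ₀ = permCongrME (ConjAct.ofConjAct (k : ConjAct (Equiv.Perm α))) τ₀ := by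
          rw [hsm]; exact (Equiv.permCongr_eq_mul _ τ₀).symm
        rw [h1]; exact uniform_permCongr _ hτ₀u x
      · calc (k • τ₀) ^ m
            = (ConjAct.ofConjAct (k : ConjAct (Equiv.Perm α)) * τ₀
              * (ConjAct.ofConjAct (k : ConjAct (Equiv.Perm α)))⁻¹) ^ m := by rw [hsm]
          _ = ConjAct.ofConjAct (k : ConjAct (Equiv.Perm α)) * τ₀ ^ m
              * (ConjAct.ofConjAct (k : ConjAct (Equiv.Perm α)))⁻¹ := conj_pow_eq _ _ m
          _ = σ := by rw [hτ₀m, hhσ]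
  -- orbit-stabilizer
  have hcount : Nat.card {τ : Equiv.Perm α //
        (∀ x : α, Set.ncard {y : α | τ.SameCycle x y} = g * ℓ) ∧ τ ^ m = σ}
      * Nat.card (MulAction.stabilizer H τ₀) = Nat.card H := by
    have h1 : Nat.card {τ : Equiv.Perm α //
        (∀ x : α, Set.ncard {y : α | τ.SameCycle x y} = g * ℓ) ∧ τ ^ m = σ}
        = Nat.card (MulAction.orbit H τ₀) :=
      Nat.card_congr (Equiv.subtypeEquivRight horb)
    rw [h1, ← Nat.card_prod]
    exact Nat.card_congr (MulAction.orbitProdStabilizerEquivGroup H τ₀)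
  have hstab : Nat.card (MulAction.stabilizer H τ₀)
      = Nat.card (Subgroup.centralizer ({τ₀} : Set (Equiv.Perm α))) := by
    rw [hH]
    refine card_stabilizer_sub σ τ₀ (fun g' hg' => ?_)
    have h2 := Commute.pow_left hg' m
    rwa [hτ₀m] at h2
  have hHcard : Nat.card H = Nat.card (Subgroup.centralizer ({σ} : Set (Equiv.Perm α))) := by
    rw [hH]; exact card_stabilizer_conjAct σ
  -- centralizer cardinalities via the models
  have hcen_τ : Nat.card (Subgroup.centralizer ({τ₀} : Set (Equiv.Perm α)))
      = (g * ℓ) ^ p * Nat.factorial p := by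
    have h1 : τ₀ = (MulAut.conj ρ) τ₁ := by rw [hτ₀]; rfl
    rw [h1, card_centralizer_congr (MulAut.conj ρ) τ₁, hτ₁,
      card_centralizer_congr (permCongrME e₁) T, hT, card_centralizer_modelRot]
  have hcen_σ : Nat.card (Subgroup.centralizer ({σ} : Set (Equiv.Perm α)))
      = ℓ ^ (g * p) * Nat.factorial (g * p) := by
    set T₂ : Equiv.Perm (Fin (g * p) × ZMod ℓ) := modelRot (g * p) ℓ 1 with hT₂
    have hT₂u : ∀ x, Set.ncard {y | T₂.SameCycle x y} = ℓ := by
      intro x; rw [hT₂, modelRot_orbit_ncard, ZMod.addOrderOf_one]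
    have hσ₂u := uniform_permCongr e₂ hT₂u
    have hc2 : IsConj (permCongrME e₂ T₂) σ :=
      uniform_isConj (k := g * p) hℓ hσ₂u hσ (by rw [hcard]; ring)
    obtain ⟨ρ₂, hρ₂⟩ := isConj_iff.1 hc2
    have h1 : σ = (MulAut.conj ρ₂) (permCongrME e₂ T₂) := by rw [← hρ₂]; rfl
    rw [h1, card_centralizer_congr (MulAut.conj ρ₂) (permCongrME e₂ T₂),
      card_centralizer_congr (permCongrME e₂) T₂, hT₂, card_centralizer_modelRot]
  rw [hstab, hcen_τ, hHcard, hcen_σ] at hcount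
  -- final arithmetic
  set N : ℕ := Nat.card {τ : Equiv.Perm α //
        (∀ x : α, Set.ncard {y : α | τ.SameCycle x y} = g * ℓ) ∧ τ ^ m = σ} with hN
  have hexp : p * (g - 1) + p = g * p := by
    rcases g with _ | g'
    · omega
    · simp only [Nat.succ_sub_one]; ring
  apply Nat.eq_of_mul_eq_mul_right (pow_pos hℓ p)
  calc N * (g ^ p * Nat.factorial p) * ℓ ^ p
      = N * ((g * ℓ) ^ p * Nat.factorial p) := by rw [mul_pow]; ring
    _ = ℓ ^ (g * p) * Nat.factorial (g * p) := hcount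
    _ = Nat.factorial (g * p) * ℓ ^ (p * (g - 1)) * ℓ ^ p := by
        rw [mul_assoc, ← pow_add, hexp, mul_comm]
end

section
/- Let g, ℓ be positive integers and let C_1, …, C_g be disjoint cycles of length ℓ each. Then the number of cycles D of length g·ℓ on the union of their supports such that D^m = C_1 ⋯ C_g (where m is a positive integer with gcd(g·ℓ, m) = g) equals (g−1)! · ℓ^{g−1}. -/
open Equiv Equiv.Perm Finset
open Fin.NatCast
private lemma cyc_pow_fix {α : Type*} [Fintype α] [DecidableEq α] {c : Equiv.Perm α} {x : α}
    (hc : c.IsCycle) (hx : x ∈ c.support) (t : ℕ) :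
    (c ^ t) x = x ↔ c.support.card ∣ t := by
  rw [← hc.orderOf, orderOf_dvd_iff_pow_eq_one]
  constructor
  · intro h
    exact hc.pow_eq_one_iff.mpr ⟨x, Equiv.Perm.mem_support.mp hx, h⟩
  · intro h; rw [h]; rfl

private lemma cyc_pow_apply_modEq {α : Type*} [Fintype α] [DecidableEq α] {c : Equiv.Perm α}
    {x : α} (hc : c.IsCycle) (hx : x ∈ c.support) {s t : ℕ} (h : (c ^ s) x = (c ^ t) x) :
    s ≡ t [MOD c.support.card] := by
  have key : ∀ s t : ℕ, s ≤ t → (c ^ s) x = (c ^ t) x → s ≡ t [MOD c.support.card] := by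
    intro s t hst he
    have h1 : (c ^ (t - s)) ((c ^ s) x) = (c ^ s) x := by
      rw [← Equiv.Perm.mul_apply, ← pow_add, Nat.sub_add_cancel hst, he]
    have h2 : (c ^ s) x ∈ c.support := Equiv.Perm.pow_apply_mem_support.mpr hx
    exact ((Nat.modEq_iff_dvd' hst).mpr ((cyc_pow_fix hc h2 _).mp h1))
  rcases le_total s t with hst | hst
  · exact key s t hst h
  · exact (key t s hst h.symm).symm

private lemma finRotate_pow_apply {n : ℕ} [NeZero n] (t : ℕ) (i : Fin n) :
    ((finRotate n) ^ t) i = i + (t : Fin n) := by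
  obtain ⟨k, rfl⟩ : ∃ k, n = k + 1 :=
    ⟨n - 1, (Nat.succ_pred_eq_of_pos (Nat.pos_of_ne_zero (NeZero.ne n))).symm⟩
  induction t generalizing i with
  | zero => simp
  | succ t ih =>
    rw [pow_succ, Equiv.Perm.mul_apply, finRotate_succ_apply, ih, Nat.cast_add, Nat.cast_one]
    abel

private lemma card_perm_fixing {β : Type*} [Fintype β] [DecidableEq β] (b : β) :
    Nat.card {e : Equiv.Perm β // e b = b} = (Fintype.card β - 1).factorial := by
  classical
  have e1 : {e : Equiv.Perm β // e b = b} ≃ {f : Equiv.Perm β // ∀ a, ¬ a ≠ b → f a = a} :=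
    Equiv.subtypeEquivRight (by
      intro f
      constructor
      · intro h a ha
        rw [not_ne_iff] at ha; subst ha; exact h
      · intro h; exact h b (by simp))
  have e2 := Equiv.Perm.subtypeEquivSubtypePerm (fun a : β => a ≠ b)
  rw [Nat.card_congr (e1.trans e2.symm), Nat.card_eq_fintype_card, Fintype.card_perm]
  congr 1
  rw [Fintype.card_subtype_compl, Fintype.card_subtype_eq]

private lemma card_fun_fixing {β γ : Type*} [Fintype β] [DecidableEq β] [Fintype γ]
    (b : β) (c : γ) :
    Nat.card {k : β → γ // k b = c} = Fintype.card γ ^ (Fintype.card β - 1) := by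
  classical
  have e1 : {k : β → γ // k b = c} ≃ ({a : β // a ≠ b} → γ) :=
    { toFun := fun k a => k.1 a.1
      invFun := fun h => ⟨fun a => if ha : a = b then c else h ⟨a, ha⟩, by simp⟩
      left_inv := by
        intro k; ext a
        by_cases ha : a = b
        · subst ha; simp [k.2]
        · simp [ha]
      right_inv := by
        intro h; funext a
        simp [a.2] }
  rw [Nat.card_congr e1, Nat.card_eq_fintype_card, Fintype.card_fun]
  congr 1
  rw [Fintype.card_subtype_compl, Fintype.card_subtype_eq]

theorem card_big_cycles_over_product {α : Type*} [Fintype α] [DecidableEq α]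
    (g ℓ m : ℕ) (hg : 0 < g) (hℓ : 0 < ℓ) (hm : 0 < m)
    (hgcd : Nat.gcd (g * ℓ) m = g)
    (C : Fin g → Equiv.Perm α)
    (hcyc : ∀ i, (C i).IsCycle ∧ (C i).support.card = ℓ)
    (hdisj : Pairwise fun i j => (C i).Disjoint (C j)) :
    Nat.card {D : Equiv.Perm α // D.IsCycle ∧ D.support.card = g * ℓ ∧
        D.support = Finset.univ.biUnion (fun i => (C i).support) ∧
        D ^ m = (List.ofFn C).prod} =
      Nat.factorial (g - 1) * ℓ ^ (g - 1) := by
  classical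
  haveI : NeZero g := ⟨hg.ne'⟩
  haveI : NeZero ℓ := ⟨hℓ.ne'⟩
  set n := g * ℓ with hn
  set S := Finset.univ.biUnion (fun i => (C i).support) with hSdef
  set P := (List.ofFn C).prod with hPdef
  have hℓ2 : 2 ≤ ℓ := (hcyc 0).2 ▸ (hcyc 0).1.two_le_card_support
  have hn2 : 2 ≤ n := le_trans hℓ2 (Nat.le_mul_of_pos_left ℓ hg)
  haveI : NeZero n := ⟨by omega⟩
  have hgn : g ∣ n := dvd_mul_right g ℓ
  have hLpair : (List.ofFn C).Pairwise Equiv.Perm.Disjoint := by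
    rw [List.pairwise_ofFn]
    intro i j hij
    exact hdisj (ne_of_lt hij)
  have hmemL : ∀ i, C i ∈ List.ofFn C := by
    intro i; rw [List.mem_ofFn]; exact ⟨i, rfl⟩
  have hsupp_disj : ∀ i j : Fin g, i ≠ j → Disjoint (C i).support (C j).support :=
    fun i j h => Equiv.Perm.disjoint_iff_disjoint_support.mp (hdisj h)
  have hmemS : ∀ (i : Fin g) (x : α), x ∈ (C i).support → x ∈ S :=
    fun i x hx => Finset.mem_biUnion.mpr ⟨i, Finset.mem_univ _, hx⟩
  have hind_ex : ∀ x : α, ∃ i : Fin g, x ∈ S → x ∈ (C i).support := by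
    intro x
    by_cases hx : x ∈ S
    · obtain ⟨i, -, hi⟩ := Finset.mem_biUnion.mp hx
      exact ⟨i, fun _ => hi⟩
    · exact ⟨0, fun h => absurd h hx⟩
  choose ind hind using hind_ex
  have hind_eq : ∀ (i : Fin g) (x : α), x ∈ (C i).support → ind x = i := by
    intro i x hx
    by_contra hne
    exact (Finset.disjoint_left.mp (hsupp_disj _ _ hne) (hind x (hmemS i x hx))) hx
  have hPapp : ∀ (i : Fin g) (x : α), x ∈ (C i).support → P x = C i x :=
    fun i x hx => (Equiv.Perm.eq_on_support_mem_disjoint (hmemL i) hLpair x hx).symm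
  have hsuppP : P.support = S := by
    ext x
    constructor
    · intro hx
      obtain ⟨f, hf, hxf⟩ := Equiv.Perm.exists_mem_support_of_mem_support_prod hx
      rw [List.mem_ofFn] at hf
      obtain ⟨i, rfl⟩ := hf
      exact hmemS i x hxf
    · intro hx
      obtain ⟨i, -, hxi⟩ := Finset.mem_biUnion.mp hx
      exact Equiv.Perm.support_le_prod_of_mem (hmemL i) hLpair hxi
  have hcardS : S.card = n := by
    rw [hSdef, Finset.card_biUnion (fun i _ j _ h => hsupp_disj i j h)]
    simp only [(hcyc _).2, Finset.sum_const, Finset.card_univ, Fintype.card_fin, smul_eq_mul, hn]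
  have horderC : ∀ i, orderOf (C i) = ℓ := fun i => (hcyc i).1.orderOf.trans (hcyc i).2
  have hCfix : ∀ (i : Fin g) (x : α) (t : ℕ), x ∈ (C i).support →
      (((C i) ^ t) x = x ↔ ℓ ∣ t) := by
    intro i x t hx
    rw [← (hcyc i).2]
    exact cyc_pow_fix (hcyc i).1 hx t
  have hPpow : ∀ (i : Fin g) (t : ℕ) (x : α), x ∈ (C i).support →
      (P ^ t) x = ((C i) ^ t) x := by
    intro i t
    induction t with
    | zero => simp
    | succ t ih =>
      intro x hx
      rw [pow_succ', pow_succ', Equiv.Perm.mul_apply, Equiv.Perm.mul_apply, ih x hx,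
        hPapp i _ (Equiv.Perm.pow_apply_mem_support.mpr hx)]
  have hmemPpow : ∀ (i : Fin g) (t : ℕ) (x : α), x ∈ (C i).support →
      (P ^ t) x ∈ (C i).support := by
    intro i t x hx
    rw [hPpow i t x hx]
    exact Equiv.Perm.pow_apply_mem_support.mpr hx
  have hPl : P ^ ℓ = 1 := by
    ext x
    by_cases hx : x ∈ S
    · rw [hPpow (ind x) ℓ x (hind x hx)]
      simpa using (hCfix (ind x) x ℓ (hind x hx)).mpr dvd_rfl
    · have hfix : P x = x := Equiv.Perm.notMem_support.mp (by rw [hsuppP]; exact hx)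
      simp [Equiv.Perm.pow_apply_eq_self_of_apply_eq_self hfix]
  have hordP : orderOf P ∣ ℓ := orderOf_dvd_iff_pow_eq_one.mpr hPl
  have hPmod : ∀ s t : ℕ, s ≡ t [MOD ℓ] → P ^ s = P ^ t :=
    fun s t h => pow_eq_pow_iff_modEq.mpr (h.of_dvd hordP)
  obtain ⟨m₁, hm1⟩ : g ∣ m := hgcd ▸ Nat.gcd_dvd_right (g * ℓ) m
  have hcop : Nat.Coprime ℓ m₁ := by
    have h1 : g * Nat.gcd ℓ m₁ = g := by
      rw [← Nat.gcd_mul_left, ← hm1]; exact hgcd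
    exact Nat.eq_of_mul_eq_mul_left hg (by rw [h1, mul_one])
  obtain ⟨u, hu'⟩ : ∃ u, m₁ * u % ℓ = 1 :=
    by obtain ⟨u, -, hu⟩ := Nat.exists_mul_mod_eq_one_of_coprime hcop.symm hℓ2; exact ⟨u, hu⟩
  have hu : m₁ * u ≡ 1 [MOD ℓ] := by
    unfold Nat.ModEq
    rw [hu', Nat.mod_eq_of_lt hℓ2]
  have hcopu : Nat.Coprime ℓ u := by
    have hd1 : Nat.gcd ℓ u ∣ 1 := by
      have h2 : Nat.gcd ℓ u ∣ m₁ * u % ℓ :=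
        (Nat.dvd_mod_iff (Nat.gcd_dvd_left ℓ u)).mpr (Dvd.dvd.mul_left (Nat.gcd_dvd_right ℓ u) m₁)
      rwa [hu'] at h2
    exact Nat.eq_one_of_dvd_one hd1
  have hmun : m * u ≡ g [MOD n] := by
    have h1 : g * (m₁ * u) ≡ g * 1 [MOD g * ℓ] := hu.mul_left' g
    rw [mul_one] at h1
    rw [hm1, mul_assoc]
    exact h1
  -- base points
  have hbex : ∀ i : Fin g, ∃ x, x ∈ (C i).support := by
    intro i
    obtain ⟨x, hx⟩ := Finset.card_pos.mp (by rw [(hcyc i).2]; exact hℓ)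
    exact ⟨x, hx⟩
  choose b hb using hbex
  -- discrete logarithm along each cycle
  have hdlog_ex : ∀ (i : Fin g) (x : α), ∃ k : ℕ, x ∈ (C i).support →
      k < ℓ ∧ ((C i) ^ k) (b i) = x := by
    intro i x
    by_cases hx : x ∈ (C i).support
    · obtain ⟨k, hk⟩ := (hcyc i).1.exists_pow_eq
        (Equiv.Perm.mem_support.mp (hb i)) (Equiv.Perm.mem_support.mp hx)
      have hmod : ((C i) ^ (k % ℓ)) = (C i) ^ k := by
        conv_lhs => rw [← horderC i]
        exact pow_mod_orderOf _ _
      exact ⟨k % ℓ, fun _ => ⟨Nat.mod_lt _ hℓ, by rw [hmod, hk]⟩⟩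
    · exact ⟨0, fun h => absurd h hx⟩
  choose dlog hdlog using hdlog_ex
  have hCinj : ∀ (i : Fin g) (k k' : ℕ), k < ℓ → k' < ℓ →
      ((C i) ^ k) (b i) = ((C i) ^ k') (b i) → k = k' := by
    intro i k k' hk hk' he
    have := cyc_pow_apply_modEq (hcyc i).1 (hb i) he
    rw [(hcyc i).2] at this
    unfold Nat.ModEq at this
    rwa [Nat.mod_eq_of_lt hk, Nat.mod_eq_of_lt hk'] at this
  have hPinj : ∀ (i : Fin g) (x : α) (s t : ℕ), x ∈ (C i).support →
      (P ^ s) x = (P ^ t) x → s ≡ t [MOD ℓ] := by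
    intro i x s t hx he
    rw [hPpow i s x hx, hPpow i t x hx] at he
    have := cyc_pow_apply_modEq (hcyc i).1 hx he
    rwa [(hcyc i).2] at this
  -- the data maps
  set wF : (Equiv.Perm (Fin g) × (Fin g → Fin ℓ)) → Fin g → α :=
    fun d r => ((C (d.1 r)) ^ ((d.2 r : ℕ))) (b (d.1 r)) with hwF
  set fF : (Equiv.Perm (Fin g) × (Fin g → Fin ℓ)) → Fin n → α :=
    fun d i => (P ^ (u * ((i : ℕ) / g))) (wF d ⟨(i : ℕ) % g, Nat.mod_lt _ hg⟩) with hfF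
  have hwmem : ∀ d r, wF d r ∈ (C (d.1 r)).support :=
    fun d r => Equiv.Perm.pow_apply_mem_support.mpr (hb _)
  have hfmem : ∀ d (i : Fin n),
      fF d i ∈ (C (d.1 ⟨(i : ℕ) % g, Nat.mod_lt _ hg⟩)).support :=
    fun d i => hmemPpow _ _ _ (hwmem d _)
  have hfS : ∀ d (i : Fin n), fF d i ∈ S := fun d i => hmemS _ _ (hfmem d i)
  have hqlt : ∀ i : Fin n, (i : ℕ) / g < ℓ :=
    fun i => (Nat.div_lt_iff_lt_mul hg).mpr (by rw [mul_comm]; exact i.isLt)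
  have hfinj : ∀ d, Function.Injective (fF d) := by
    intro d i i' he
    have hr : d.1 ⟨(i : ℕ) % g, Nat.mod_lt _ hg⟩ = d.1 ⟨(i' : ℕ) % g, Nat.mod_lt _ hg⟩ := by
      rw [← hind_eq _ _ (hfmem d i), ← hind_eq _ _ (hfmem d i'), he]
    have hrr : ((⟨(i : ℕ) % g, Nat.mod_lt _ hg⟩ : Fin g)) = ⟨(i' : ℕ) % g, Nat.mod_lt _ hg⟩ :=
      d.1.injective hr
    rw [hfF] at he
    simp only at he
    rw [hrr] at he
    have hq : u * ((i : ℕ) / g) ≡ u * ((i' : ℕ) / g) [MOD ℓ] :=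
      hPinj _ _ _ _ (hwmem d _) he
    have hq2 : (i : ℕ) / g ≡ (i' : ℕ) / g [MOD ℓ] :=
      Nat.ModEq.cancel_left_of_coprime hcopu hq
    have hq3 : (i : ℕ) / g = (i' : ℕ) / g := by
      unfold Nat.ModEq at hq2
      rwa [Nat.mod_eq_of_lt (hqlt i), Nat.mod_eq_of_lt (hqlt i')] at hq2
    have hrr' : (i : ℕ) % g = (i' : ℕ) % g := congrArg Fin.val hrr
    apply Fin.ext
    rw [← Nat.div_add_mod (i : ℕ) g, ← Nat.div_add_mod (i' : ℕ) g, hq3, hrr']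
  have hbijF : ∀ d, Function.Bijective
      (fun i : Fin n => (⟨fF d i, hfS d i⟩ : {x // x ∈ S})) := by
    intro d
    rw [Fintype.bijective_iff_injective_and_card]
    constructor
    · intro i i' h
      exact hfinj d (congrArg Subtype.val h)
    · rw [Fintype.card_coe, hcardS, Fintype.card_fin]
  set FEquiv : (Equiv.Perm (Fin g) × (Fin g → Fin ℓ)) → (Fin n ≃ {x // x ∈ S}) :=
    fun d => Equiv.ofBijective _ (hbijF d) with hFEquiv
  have hFcoe : ∀ d (i : Fin n), (FEquiv d i : α) = fF d i := fun d i => rfl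
  set Psi : (Equiv.Perm (Fin g) × (Fin g → Fin ℓ)) → Equiv.Perm α :=
    fun d => Equiv.Perm.extendDomain (finRotate n) (FEquiv d) with hPsi
  have hext : ∀ d (t : ℕ) (i : Fin n),
      ((Psi d) ^ t) ((FEquiv d) i : α) = ((FEquiv d) (i + (t : Fin n)) : α) := by
    intro d t i
    have h1 : (Psi d) ^ t = Equiv.Perm.extendDomain ((finRotate n) ^ t) (FEquiv d) := by
      rw [hPsi]
      simp only
      rw [← Equiv.Perm.extendDomain_pow]
    rw [h1, Equiv.Perm.extendDomain_apply_image, finRotate_pow_apply]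
  have hstep : ∀ d (j j' : Fin n), ((j' : ℕ) ≡ (j : ℕ) + m [MOD n]) →
      fF d j' = P (fF d j) := by
    intro d j j' hjj
    have hmg : m ≡ 0 [MOD g] := Nat.modEq_zero_iff_dvd.mpr ⟨m₁, hm1⟩
    have hrr : (j' : ℕ) % g = (j : ℕ) % g := by
      have h1 : (j' : ℕ) ≡ (j : ℕ) + m [MOD g] := hjj.of_dvd hgn
      have h2 : (j : ℕ) + m ≡ (j : ℕ) + 0 [MOD g] := Nat.ModEq.add_left _ hmg
      have h3 := h1.trans h2
      rw [add_zero] at h3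
      exact h3
    have hq : u * ((j' : ℕ) / g) ≡ u * ((j : ℕ) / g) + 1 [MOD ℓ] := by
      have e1 : (j' : ℕ) = g * ((j' : ℕ) / g) + (j : ℕ) % g := by
        rw [← hrr, Nat.div_add_mod]
      have e2 : (j : ℕ) + m = g * ((j : ℕ) / g + m₁) + (j : ℕ) % g := by
        conv_lhs => rw [← Nat.div_add_mod (j : ℕ) g, hm1]
        ring
      rw [e1, e2] at hjj
      have h4 : (j' : ℕ) / g ≡ (j : ℕ) / g + m₁ [MOD ℓ] :=
        Nat.ModEq.mul_left_cancel' hg.ne' (Nat.ModEq.add_right_cancel' _ hjj)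
      have h5 := h4.mul_left u
      rw [mul_add] at h5
      have h6 : u * ((j : ℕ) / g) + u * m₁ ≡ u * ((j : ℕ) / g) + 1 [MOD ℓ] :=
        Nat.ModEq.add_left _ (by rw [mul_comm]; exact hu)
      exact h5.trans h6
    have hfin : ((⟨(j' : ℕ) % g, Nat.mod_lt _ hg⟩ : Fin g)) = ⟨(j : ℕ) % g, Nat.mod_lt _ hg⟩ :=
      Fin.ext hrr
    rw [hfF]
    simp only
    rw [hfin, hPmod _ _ hq, pow_succ', Equiv.Perm.mul_apply]
  have hPsiCyc : ∀ d, (Psi d).IsCycle :=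
    fun d => (isCycle_finRotate_of_le hn2).extendDomain (FEquiv d)
  have hPsiSupp : ∀ d, (Psi d).support = S := by
    intro d
    rw [hPsi]
    simp only
    rw [Equiv.Perm.support_extend_domain, support_finRotate_of_le hn2]
    ext x
    simp only [Finset.mem_map, Finset.mem_univ, true_and, Equiv.asEmbedding_apply]
    constructor
    · rintro ⟨i, rfl⟩
      exact ((FEquiv d) i).2
    · intro hx
      exact ⟨(FEquiv d).symm ⟨x, hx⟩, by rw [Equiv.apply_symm_apply]⟩
  have hfstep : ∀ d (i : Fin n), fF d (i + (m : Fin n)) = P (fF d i) := by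
    intro d i
    apply hstep
    have hval : ((i + (m : Fin n) : Fin n) : ℕ) = (((i : ℕ) + m % n) % n) := by
      rw [Fin.add_def]
      simp [Fin.val_natCast]
    rw [hval]
    exact (Nat.mod_modEq _ n).trans (Nat.ModEq.add_left _ (Nat.mod_modEq m n))
  have hPsiPow : ∀ d, (Psi d) ^ m = P := by
    intro d
    ext x
    by_cases hx : x ∈ S
    · obtain ⟨i, hi⟩ : ∃ i, (FEquiv d) i = ⟨x, hx⟩ :=
        ⟨(FEquiv d).symm _, Equiv.apply_symm_apply _ _⟩
      have hxi : x = ((FEquiv d) i : α) := by rw [hi]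
      rw [hxi, hext d m i, hFcoe, hFcoe, hfstep]
    · have h1 : Psi d x = x := Equiv.Perm.extendDomain_apply_not_subtype _ _ hx
      rw [Equiv.Perm.pow_apply_eq_self_of_apply_eq_self h1,
        Equiv.Perm.notMem_support.mp (by rw [hsuppP]; exact hx)]
  have hzg : ((⟨0, hg⟩ : Fin g)) = 0 := by
    apply Fin.ext
    simp
  have ha : ∀ d, d.1 0 = 0 → d.2 0 = 0 → fF d 0 = b 0 := by
    intro d h1 h2
    rw [hfF]
    simp only [Fin.val_zero, Nat.zero_div, Nat.zero_mod, mul_zero, pow_zero,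
      Equiv.Perm.one_apply]
    rw [hwF]
    simp only [hzg, h1, h2]
    simp
  have hpow_a : ∀ d, d.1 0 = 0 → d.2 0 = 0 → ∀ (s : ℕ) (hs : s < n),
      ((Psi d) ^ s) (b 0) = fF d ⟨s, hs⟩ := by
    intro d h1 h2 s hs
    have h3 := hext d s 0
    rw [hFcoe, hFcoe, ha d h1 h2, zero_add] at h3
    rw [h3]
    congr 1
    apply Fin.ext
    rw [Fin.val_natCast, Nat.mod_eq_of_lt hs]
  have hPsiInj : ∀ d d', d.1 0 = 0 → d.2 0 = 0 → d'.1 0 = 0 → d'.2 0 = 0 →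
      Psi d = Psi d' → d = d' := by
    intro d d' h1 h2 h1' h2' hdd
    have hfeq : ∀ i : Fin n, fF d i = fF d' i := by
      intro i
      have ha1 := hpow_a d h1 h2 (i : ℕ) i.isLt
      have ha2 := hpow_a d' h1' h2' (i : ℕ) i.isLt
      rw [hdd] at ha1
      have h5 : fF d ⟨(i : ℕ), i.isLt⟩ = fF d' ⟨(i : ℕ), i.isLt⟩ := by rw [← ha1, ha2]
      simpa using h5
    have hweq : ∀ r : Fin g, wF d r = wF d' r := by
      intro r
      have hrn : (r : ℕ) < n := lt_of_lt_of_le r.isLt (Nat.le_mul_of_pos_right g hℓ)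
      have h3 := hfeq ⟨(r : ℕ), hrn⟩
      rw [hfF] at h3
      simp only [Nat.div_eq_of_lt r.isLt, Nat.mod_eq_of_lt r.isLt, mul_zero, pow_zero,
        Equiv.Perm.one_apply, Fin.eta] at h3
      exact h3
    have he : d.1 = d'.1 := by
      apply Equiv.ext
      intro r
      rw [← hind_eq _ _ (hwmem d r), ← hind_eq _ _ (hwmem d' r), hweq r]
    have hk : d.2 = d'.2 := by
      funext r
      have h1w := hweq r
      rw [hwF] at h1w
      simp only [he] at h1w
      exact Fin.ext (hCinj _ _ _ (d.2 r).isLt ((d'.2 r).isLt) h1w)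
    exact Prod.ext he hk
  have hPsiSurj : ∀ D : Equiv.Perm α, D.IsCycle → D.support.card = n → D.support = S →
      D ^ m = P → ∃ d, d.1 0 = 0 ∧ d.2 0 = 0 ∧ Psi d = D := by
    intro D hD1 hD2 hD3 hD4
    have haS : b 0 ∈ S := hmemS 0 _ (hb 0)
    have haD : b 0 ∈ D.support := by rw [hD3]; exact haS
    have hDord : orderOf D = n := by rw [hD1.orderOf, hD2]
    have hDmod : ∀ s t : ℕ, s ≡ t [MOD n] → D ^ s = D ^ t := by
      intro s t h
      rw [pow_eq_pow_iff_modEq, hDord]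
      exact h
    have hDmem : ∀ s : ℕ, (D ^ s) (b 0) ∈ S := fun s => by
      rw [← hD3]; exact Equiv.Perm.pow_apply_mem_support.mpr haD
    set e' : Fin g → Fin g := fun r => ind ((D ^ (r : ℕ)) (b 0)) with he'def
    have he'mem : ∀ r, (D ^ (r : ℕ)) (b 0) ∈ (C (e' r)).support := fun r => hind _ (hDmem _)
    have he'inj : Function.Injective e' := by
      intro r r' hrr
      obtain ⟨t, ht⟩ := (hcyc (e' r)).1.exists_pow_eq
        (Equiv.Perm.mem_support.mp (he'mem r))
        (Equiv.Perm.mem_support.mp (by rw [hrr]; exact he'mem r'))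
      have h2 : (P ^ t) ((D ^ (r : ℕ)) (b 0)) = (D ^ ((r' : ℕ))) (b 0) := by
        rw [hPpow _ t _ (he'mem r)]; exact ht
      have h3 : (D ^ (m * t + (r : ℕ))) (b 0) = (D ^ ((r' : ℕ))) (b 0) := by
        rw [pow_add, Equiv.Perm.mul_apply, ← h2, ← hD4, ← pow_mul]
      have h4 : (m * t + (r : ℕ)) ≡ (r' : ℕ) [MOD n] := by
        have := cyc_pow_apply_modEq hD1 haD h3
        rwa [hD2] at this
      have h5 : (m * t + (r : ℕ)) ≡ (r' : ℕ) [MOD g] := h4.of_dvd hgn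
      have hgm : g ∣ m := ⟨m₁, hm1⟩
      have hmt : m * t ≡ 0 [MOD g] := Nat.modEq_zero_iff_dvd.mpr (hgm.mul_right t)
      have h6 : (r : ℕ) ≡ (r' : ℕ) [MOD g] := by
        have h7 := (hmt.add_right (r : ℕ)).symm.trans h5
        rwa [zero_add] at h7
      exact Fin.ext (by
        unfold Nat.ModEq at h6
        rwa [Nat.mod_eq_of_lt r.isLt, Nat.mod_eq_of_lt r'.isLt] at h6)
    set eP : Equiv.Perm (Fin g) := Equiv.ofBijective e' (Finite.injective_iff_bijective.mp he'inj)
      with hePdef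
    have hePapp : ∀ r, eP r = e' r := fun r => rfl
    set kf : Fin g → Fin ℓ :=
      fun r => ⟨dlog (e' r) ((D ^ (r : ℕ)) (b 0)), (hdlog _ _ (he'mem r)).1⟩ with hkfdef
    refine ⟨(eP, kf), ?_, ?_, ?_⟩
    · show eP 0 = 0
      rw [hePapp, he'def]
      simp only [Fin.val_zero, pow_zero, Equiv.Perm.one_apply]
      exact hind_eq 0 _ (hb 0)
    · show kf 0 = 0
      have he0 : e' 0 = 0 := by
        simp only [he'def, Fin.val_zero, pow_zero, Equiv.Perm.one_apply]
        exact hind_eq 0 _ (hb 0)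
      have hlt := (hdlog _ _ (he'mem 0)).1
      have hsp := (hdlog _ _ (he'mem 0)).2
      have h0 : (D ^ ((0 : Fin g) : ℕ)) (b 0) = b 0 := by simp
      rw [he0, h0] at hsp hlt
      have hz : dlog 0 (b 0) = 0 := hCinj 0 _ 0 hlt hℓ
        (by rw [hsp, pow_zero, Equiv.Perm.one_apply])
      apply Fin.ext
      show dlog (e' 0) ((D ^ ((0 : Fin g) : ℕ)) (b 0)) = (0 : Fin ℓ).val
      rw [he0, h0, hz, Fin.val_zero]
    · -- Psi (eP, kf) = D
      have hw' : ∀ r : Fin g, wF (eP, kf) r = (D ^ (r : ℕ)) (b 0) := by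
        intro r
        rw [hwF]
        exact (hdlog _ _ (he'mem r)).2
      have hlab : ∀ i : Fin n, fF (eP, kf) i = (D ^ (i : ℕ)) (b 0) := by
        intro i
        rw [hfF]
        simp only
        rw [hw']
        rw [← hD4, ← pow_mul, ← Equiv.Perm.mul_apply, ← pow_add]
        have harith : m * (u * ((i : ℕ) / g)) + ((i : ℕ) % g) ≡ (i : ℕ) [MOD n] := by
          have h1 : m * u * ((i : ℕ) / g) ≡ g * ((i : ℕ) / g) [MOD n] :=
            hmun.mul_right _
          have h2 := (h1.add_right ((i : ℕ) % g))
          rw [mul_assoc] at h2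
          have h3 : g * ((i : ℕ) / g) + (i : ℕ) % g = (i : ℕ) := Nat.div_add_mod _ _
          rw [h3] at h2
          exact h2
        rw [hDmod _ _ harith]
      ext x
      by_cases hx : x ∈ S
      · obtain ⟨i, hi⟩ : ∃ i, (FEquiv (eP, kf)) i = ⟨x, hx⟩ :=
          ⟨(FEquiv (eP, kf)).symm _, Equiv.apply_symm_apply _ _⟩
        have hxi : x = ((FEquiv (eP, kf)) i : α) := by rw [hi]
        have h8 := hext (eP, kf) 1 i
        rw [pow_one] at h8
        rw [hxi, h8, hFcoe, hFcoe, hlab, hlab]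
        have h9 : ((i + ((1 : ℕ) : Fin n) : Fin n) : ℕ) ≡ (i : ℕ) + 1 [MOD n] := by
          rw [Fin.add_def]
          simp only [Fin.val_natCast]
          exact (Nat.mod_modEq _ n).trans (Nat.ModEq.add_left _ (Nat.mod_modEq 1 n))
        rw [hDmod _ _ h9, pow_succ', Equiv.Perm.mul_apply]
      · rw [show Psi (eP, kf) x = x from Equiv.Perm.extendDomain_apply_not_subtype _ _ hx]
        exact (Equiv.Perm.notMem_support.mp (by rw [hD3]; exact hx)).symm
  have hbijPsi : Function.Bijective
      (fun d : {d : Equiv.Perm (Fin g) × (Fin g → Fin ℓ) // d.1 0 = 0 ∧ d.2 0 = 0} =>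
        (⟨Psi d.1, hPsiCyc d.1, by rw [hPsiSupp d.1]; exact hcardS, hPsiSupp d.1, hPsiPow d.1⟩ :
          { D : Equiv.Perm α // D.IsCycle ∧ D.support.card = n ∧ D.support = S ∧ D ^ m = P })) := by
    constructor
    · rintro ⟨d, hd1, hd2⟩ ⟨d', hd1', hd2'⟩ h
      exact Subtype.ext (hPsiInj d d' hd1 hd2 hd1' hd2' (congrArg Subtype.val h))
    · rintro ⟨D, h1, h2, h3, h4⟩
      obtain ⟨d, hq1, hq2, hPsiD⟩ := hPsiSurj D h1 h2 h3 h4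
      exact ⟨⟨d, hq1, hq2⟩, Subtype.ext hPsiD⟩
  rw [← Nat.card_congr (Equiv.ofBijective _ hbijPsi),
    Nat.card_congr (Equiv.subtypeProdEquivProd (p := fun e : Equiv.Perm (Fin g) => e 0 = 0)
      (q := fun k : Fin g → Fin ℓ => k 0 = 0)), Nat.card_prod,
    card_perm_fixing (0 : Fin g), card_fun_fixing (0 : Fin g) (0 : Fin ℓ),
    Fintype.card_fin, Fintype.card_fin]
end
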